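/- For every real number z with 0 ≤ z < 1/2, ∑_{n=0}^∞ 4^n z^{n+1} / ((2n+1)·binom(2n,n)) = ∑_{n=0}^∞ ((−1)^n/(2n+1)) · (z/(1−z))^{n+1}. -/

import Mathlib

open MeasureTheory intervalIntegral Finset Nat

private lemma prod_shift (m : ℕ) : ∀ k : ℕ, m ! * ∏ j ∈ Finset.range k, (m + 1 + j) = (m + k)!
  | 0 => by simp
  | k + 1 => by
    rw [Finset.prod_range_succ, ← mul_assoc, mul_comm (m ! * ∏ j ∈ Finset.range k, (m + 1 + j)),
      prod_shift m k, show m + (k + 1) = (m + k) + 1 from by ring, Nat.factorial_succ]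
    ring_nf

private lemma beta_nat (n : ℕ) :
    ∫ t in (0:ℝ)..1, t ^ n * (1 - t) ^ n = (n ! : ℝ) * n ! / (2 * n + 1)! := by
  have hu : 0 < Complex.re ((n : ℂ) + 1) := by
    simp only [Complex.add_re, Complex.natCast_re, Complex.one_re]
    positivity
  have h := Complex.betaIntegral_eval_nat_add_one_right hu n
  have hp : ((n ! : ℂ)) * (∏ j ∈ Finset.range (n + 1), ((n : ℂ) + 1 + j)) = ((2 * n + 1)! : ℂ) := by
    have h0 := prod_shift n (n + 1)
    rw [show n + (n + 1) = 2 * n + 1 from by ring] at h0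
    exact_mod_cast congrArg (fun m : ℕ => (m : ℂ)) h0
  have hne : ((n)! : ℂ) ≠ 0 := Nat.cast_ne_zero.mpr (Nat.factorial_ne_zero n)
  have hne2 : (((2 * n + 1))! : ℂ) ≠ 0 := Nat.cast_ne_zero.mpr (Nat.factorial_ne_zero _)
  have hprodne : (∏ j ∈ Finset.range (n + 1), ((n : ℂ) + 1 + j)) ≠ 0 := by
    intro h0
    rw [h0, mul_zero] at hp
    exact hne2 hp.symm
  have h2 : Complex.betaIntegral ((n : ℂ) + 1) ((n : ℂ) + 1) =
      (n ! : ℂ) * n ! / (2 * n + 1)! := by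
    rw [h, div_eq_div_iff hprodne hne2]
    linear_combination (-(n ! : ℂ)) * hp
  rw [Complex.betaIntegral] at h2
  simp only [add_sub_cancel_right, Complex.cpow_natCast] at h2
  have hir : ∀ x : ℝ, ((x : ℂ)) ^ n * (1 - (x : ℂ)) ^ n = ((x ^ n * (1 - x) ^ n : ℝ) : ℂ) := by
    intro x; push_cast; ring
  simp_rw [hir, intervalIntegral.integral_ofReal] at h2
  rw [← Complex.ofReal_inj, h2]
  push_cast
  ring

/-- For `0 ≤ z < 1/2`,
`∑_{n=0}^∞ 4^n z^(n+1)/((2n+1)·binom(2n,n))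
  = ∑_{n=0}^∞ ((-1)^n/(2n+1))·(z/(1-z))^(n+1)`. -/
theorem sprugnoli_alternating_form (z : ℝ) (hz0 : 0 ≤ z) (hz1 : z < 1 / 2) :
    ∑' n : ℕ, 4 ^ n * z ^ (n + 1) / ((2 * (n : ℝ) + 1) * ((2 * n).choose n : ℝ))
      = ∑' n : ℕ, (-1) ^ n / (2 * (n : ℝ) + 1) * (z / (1 - z)) ^ (n + 1) := by
  have hz1' : z < 1 := by linarith
  have h1z : (0:ℝ) < 1 - z := by linarith
  set w : ℝ := z / (1 - z) with hw
  have hw0 : 0 ≤ w := div_nonneg hz0 h1z.le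
  have hw1 : w < 1 := by rw [hw, div_lt_one h1z]; linarith
  have hden : ∀ t : ℝ, 4 * z * (t * (1 - t)) ≤ z := by
    intro t; nlinarith [sq_nonneg (2 * t - 1)]
  have hdenpos : ∀ t : ℝ, 0 < 1 - 4 * z * (t * (1 - t)) := by
    intro t; have := hden t; linarith
  have hkden : ∀ s : ℝ, 0 < 1 + w * s ^ 2 := by
    intro s; nlinarith [mul_nonneg hw0 (sq_nonneg s)]
  have hcont_h : Continuous fun t : ℝ => z / (1 - 4 * z * (t * (1 - t))) :=
    continuous_const.div (by fun_prop) fun t => (hdenpos t).ne'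
  have hcont_k : Continuous fun s : ℝ => w / (1 + w * s ^ 2) :=
    continuous_const.div (by fun_prop) fun s => (hkden s).ne'
  -- LHS as an integral
  have hL : ∑' n : ℕ, 4 ^ n * z ^ (n + 1) / ((2 * (n : ℝ) + 1) * ((2 * n).choose n : ℝ))
      = ∫ t in Set.Ioc (0:ℝ) 1, z / (1 - 4 * z * (t * (1 - t))) := by
    have hterm : ∀ n : ℕ, 4 ^ n * z ^ (n + 1) / ((2 * (n : ℝ) + 1) * ((2 * n).choose n : ℝ))
        = ∫ t in Set.Ioc (0:ℝ) 1, z * (4 * z * (t * (1 - t))) ^ n := by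
      intro n
      rw [← intervalIntegral.integral_of_le (by norm_num : (0:ℝ) ≤ 1)]
      have hre : ∀ t : ℝ, z * (4 * z * (t * (1 - t))) ^ n
          = (z * (4 * z) ^ n) * (t ^ n * (1 - t) ^ n) := by
        intro t; rw [mul_pow (4 * z), mul_pow t]; ring
      simp_rw [hre]
      rw [intervalIntegral.integral_const_mul, beta_nat]
      have hC : ((2 * n).choose n : ℝ) * n ! * n ! = (2 * n)! := by
        have h0 := Nat.choose_mul_factorial_mul_factorial (show n ≤ 2 * n by omega)
        rw [show 2 * n - n = n from by omega] at h0
        exact_mod_cast h0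
      have hfact : ((2 * n + 1)! : ℝ) = (2 * (n : ℝ) + 1) * (2 * n)! := by
        rw [Nat.factorial_succ]; push_cast; ring
      have hC0 : (0:ℝ) < ((2 * n).choose n : ℝ) :=
        Nat.cast_pos.mpr (Nat.choose_pos (by omega))
      have hn0 : (0:ℝ) < 2 * (n : ℝ) + 1 := by positivity
      have hf0 : (0:ℝ) < ((2 * n + 1)! : ℝ) := Nat.cast_pos.mpr (Nat.factorial_pos _)
      have key : (2 * (n:ℝ) + 1) * (((2 * n).choose n : ℝ) * ((n ! : ℝ) * n !))
          = ((2 * n + 1)! : ℝ) := by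
        rw [hfact]; linear_combination (2 * (n:ℝ) + 1) * hC
      rw [← mul_div_assoc, div_eq_div_iff (mul_pos hn0 hC0).ne' hf0.ne']
      linear_combination (-((4:ℝ) ^ n * z ^ (n + 1))) * key
    rw [tsum_congr hterm]
    have hint : ∀ n : ℕ, Integrable (fun t : ℝ => z * (4 * z * (t * (1 - t))) ^ n)
        (volume.restrict (Set.Ioc (0:ℝ) 1)) := by
      intro n
      exact (Continuous.integrableOn_Ioc (by fun_prop))
    have hbound : ∀ n : ℕ,
        (∫ t in Set.Ioc (0:ℝ) 1, ‖z * (4 * z * (t * (1 - t))) ^ n‖) ≤ z ^ (n + 1) := by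
      intro n
      have h1 : (∫ t in Set.Ioc (0:ℝ) 1, ‖z * (4 * z * (t * (1 - t))) ^ n‖)
          ≤ ∫ _ in Set.Ioc (0:ℝ) 1, z ^ (n + 1) := by
        apply setIntegral_mono_on ((hint n).norm) (integrableOn_const (by simp))
          measurableSet_Ioc
        intro t ht
        have ht0 : 0 ≤ t := ht.1.le
        have ht1 : t ≤ 1 := ht.2
        have hr0 : 0 ≤ 4 * z * (t * (1 - t)) :=
          mul_nonneg (by positivity) (mul_nonneg ht0 (by linarith))
        rw [Real.norm_eq_abs, abs_of_nonneg (by positivity)]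
        calc z * (4 * z * (t * (1 - t))) ^ n ≤ z * z ^ n :=
              mul_le_mul_of_nonneg_left (pow_le_pow_left₀ hr0 (hden t) n) hz0
          _ = z ^ (n + 1) := by ring
      calc _ ≤ _ := h1
        _ = z ^ (n + 1) := by simp
    have hsum : Summable fun n : ℕ => ∫ t in Set.Ioc (0:ℝ) 1, ‖z * (4 * z * (t * (1 - t))) ^ n‖ := by
      refine Summable.of_nonneg_of_le (fun n => integral_nonneg fun t => norm_nonneg _)
        hbound ?_
      have := (summable_geometric_of_lt_one hz0 hz1').mul_left z
      simpa [pow_succ, mul_comm] using this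
    rw [MeasureTheory.integral_tsum_of_summable_integral_norm hint hsum]
    refine setIntegral_congr_fun measurableSet_Ioc fun t ht => ?_
    have hr0 : 0 ≤ 4 * z * (t * (1 - t)) :=
      mul_nonneg (by positivity) (mul_nonneg ht.1.le (by linarith [ht.2]))
    have hr1 : 4 * z * (t * (1 - t)) < 1 := lt_of_le_of_lt (hden t) hz1'
    rw [tsum_mul_left, tsum_geometric_of_lt_one hr0 hr1, div_eq_mul_inv]
  -- RHS as an integral
  have hR : ∑' n : ℕ, (-1) ^ n / (2 * (n : ℝ) + 1) * w ^ (n + 1)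
      = ∫ s in Set.Ioc (0:ℝ) 1, w / (1 + w * s ^ 2) := by
    have hterm : ∀ n : ℕ, (-1) ^ n / (2 * (n : ℝ) + 1) * w ^ (n + 1)
        = ∫ s in Set.Ioc (0:ℝ) 1, w * (-(w * s ^ 2)) ^ n := by
      intro n
      rw [← intervalIntegral.integral_of_le (by norm_num : (0:ℝ) ≤ 1)]
      have hre : ∀ s : ℝ, w * (-(w * s ^ 2)) ^ n = (w * (-w) ^ n) * s ^ (2 * n) := by
        intro s
        rw [show -(w * s ^ 2) = (-w) * s ^ 2 from by ring, mul_pow, ← pow_mul]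
        ring
      simp_rw [hre]
      rw [intervalIntegral.integral_const_mul, integral_pow]
      rw [neg_pow]
      have : (0:ℝ) ^ (2 * n + 1) = 0 := zero_pow (by omega)
      rw [this]
      have hn0 : ((2 * n : ℕ) : ℝ) + 1 ≠ 0 := ne_of_gt (by positivity)
      field_simp
      push_cast
      ring
    rw [tsum_congr hterm]
    have hint : ∀ n : ℕ, Integrable (fun s : ℝ => w * (-(w * s ^ 2)) ^ n)
        (volume.restrict (Set.Ioc (0:ℝ) 1)) := by
      intro n
      exact (Continuous.integrableOn_Ioc (by fun_prop))
    have hbound : ∀ n : ℕ,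
        (∫ s in Set.Ioc (0:ℝ) 1, ‖w * (-(w * s ^ 2)) ^ n‖) ≤ w ^ (n + 1) := by
      intro n
      have h1 : (∫ s in Set.Ioc (0:ℝ) 1, ‖w * (-(w * s ^ 2)) ^ n‖)
          ≤ ∫ _ in Set.Ioc (0:ℝ) 1, w ^ (n + 1) := by
        apply setIntegral_mono_on ((hint n).norm) (integrableOn_const (by simp))
          measurableSet_Ioc
        intro s hs
        have hs0 : 0 ≤ s := hs.1.le
        have hs1 : s ≤ 1 := hs.2
        have hs2 : s ^ 2 ≤ 1 := by nlinarith
        have hsq : w * s ^ 2 ≤ w := by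
          nlinarith [mul_le_mul_of_nonneg_left hs2 hw0]
        have hsq0 : 0 ≤ w * s ^ 2 := by positivity
        rw [norm_mul, norm_pow, norm_neg, Real.norm_eq_abs, Real.norm_eq_abs,
          abs_of_nonneg hw0, abs_of_nonneg hsq0]
        calc w * (w * s ^ 2) ^ n ≤ w * w ^ n :=
              mul_le_mul_of_nonneg_left (pow_le_pow_left₀ hsq0 hsq n) hw0
          _ = w ^ (n + 1) := by ring
      calc _ ≤ _ := h1
        _ = w ^ (n + 1) := by simp
    have hsum : Summable fun n : ℕ => ∫ s in Set.Ioc (0:ℝ) 1, ‖w * (-(w * s ^ 2)) ^ n‖ := by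
      refine Summable.of_nonneg_of_le (fun n => integral_nonneg fun s => norm_nonneg _)
        hbound ?_
      have := (summable_geometric_of_lt_one hw0 hw1).mul_left w
      simpa [pow_succ, mul_comm] using this
    rw [MeasureTheory.integral_tsum_of_summable_integral_norm hint hsum]
    refine setIntegral_congr_fun measurableSet_Ioc fun s hs => ?_
    have hnorm : ‖-(w * s ^ 2)‖ < 1 := by
      rw [norm_neg, Real.norm_eq_abs, abs_of_nonneg (by positivity)]
      have hs2 : s ^ 2 ≤ 1 := by nlinarith [hs.1.le, hs.2]
      nlinarith [mul_le_mul_of_nonneg_left hs2 hw0]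
    rw [tsum_mul_left, tsum_geometric_of_norm_lt_one hnorm, sub_neg_eq_add, div_eq_mul_inv]
  -- the two integrals coincide
  have hIk : ∀ a b : ℝ, IntervalIntegrable (fun s => w / (1 + w * s ^ 2)) volume a b :=
    fun a b => hcont_k.intervalIntegrable a b
  have hsub : ∫ t in (0:ℝ)..1, z / (1 - 4 * z * (t * (1 - t)))
      = ∫ s in (0:ℝ)..1, w / (1 + w * s ^ 2) := by
    have hpt : ∀ s : ℝ, z / (1 - 4 * z * ((1 / 2 * s + 1 / 2) * (1 - (1 / 2 * s + 1 / 2))))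
        = w / (1 + w * s ^ 2) := by
      intro s
      rw [div_eq_div_iff (hdenpos _).ne' (hkden s).ne', hw]
      field_simp
      ring
    have h1 := intervalIntegral.integral_comp_mul_add
      (a := (-1:ℝ)) (b := 1) (f := fun t => z / (1 - 4 * z * (t * (1 - t))))
      (c := (1/2:ℝ)) (by norm_num) (1/2)
    norm_num at h1
    simp only [hpt] at h1
    have heven : ∫ s in (-1:ℝ)..0, w / (1 + w * s ^ 2)
        = ∫ s in (0:ℝ)..1, w / (1 + w * s ^ 2) := by
      have h2 := intervalIntegral.integral_comp_neg (a := (0:ℝ)) (b := 1)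
        (fun s => w / (1 + w * s ^ 2))
      rw [neg_zero] at h2
      rw [← h2]
      apply intervalIntegral.integral_congr
      intro x _
      simp [neg_sq]
    have hsplit := intervalIntegral.integral_add_adjacent_intervals (hIk (-1) 0) (hIk 0 1)
    rw [← hsplit, heven] at h1
    linarith [h1]
  rw [hL, hR, ← intervalIntegral.integral_of_le (by norm_num : (0:ℝ) ≤ 1),
    ← intervalIntegral.integral_of_le (by norm_num : (0:ℝ) ≤ 1)]
  exact hsub
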